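/- Let d ≥ 2 and let G be the grid graph on vertex set {1,…,d}^d, in which two vertices are adjacent if and only if they differ by exactly 1 in exactly one coordinate and agree in all others. Then for every A ⊆ {1,…,d}^d with 0 < |A| ≤ d^d/2, the number of edges of G with exactly one endpoint in A is at least |A|/(2d). -/

import Mathlib

open Filter Topology
open scoped Classical

noncomputable section

variable {V : Type*}

/-- Probability that the random subgraph `G(p)` lies in the event `A`. -/
noncomputable def percProb [Fintype V] [DecidableEq V] (G : SimpleGraph V) [DecidableRel G.Adj]
    (p : ℝ) (A : Set (Finset (Sym2 V))) : ℝ :=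
  ∑ F ∈ G.edgeFinset.powerset,
    if F ∈ A then p ^ F.card * (1 - p) ^ (G.edgeFinset.card - F.card) else 0

/-- Number of vertices in the component of `v` in the spanning subgraph with edge set `F`. -/
noncomputable def compCard [Fintype V] (F : Finset (Sym2 V)) (v : V) : ℕ :=
  Set.ncard {w | (SimpleGraph.fromEdgeSet (↑F : Set (Sym2 V))).Reachable v w}

/-- The ball of radius `r` around `w`. -/
def ball (G : SimpleGraph V) (w : V) (r : ℕ) : Set V :=
  {v | ∃ q : G.Walk w v, q.length ≤ r}

/-- The ball of radius `r` around a set `A`. -/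
def setBall (G : SimpleGraph V) (A : Set V) (r : ℕ) : Set V :=
  {v | ∃ u ∈ A, ∃ q : G.Walk u v, q.length ≤ r}

/-- `G` is a vertex `b`-expander. -/
def VertexExpander [Fintype V] (G : SimpleGraph V) (b : ℝ) : Prop :=
  ∀ A : Finset V, 0 < A.card → (A.card : ℝ) ≤ Fintype.card V / 2 →
    b * A.card ≤ (Set.ncard {v | v ∉ A ∧ ∃ u ∈ A, G.Adj u v} : ℝ)

/-- The set of edges of `G` with exactly one endpoint in `A`. -/
def edgeBoundary (G : SimpleGraph V) (A : Set V) : Set (Sym2 V) :=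
  {e | e ∈ G.edgeSet ∧ ∃ u v : V, e = s(u, v) ∧ u ∈ A ∧ v ∉ A}

/-- `G` is an edge `b`-expander. -/
def EdgeExpander [Fintype V] (G : SimpleGraph V) (b : ℝ) : Prop :=
  ∀ A : Finset V, 0 < A.card → (A.card : ℝ) ≤ Fintype.card V / 2 →
    b * A.card ≤ ((edgeBoundary G ↑A).ncard : ℝ)

/-- `e` is an `L`-bridge for configuration `F` (largeness threshold `c * |V|`). -/
def IsLBridge [Fintype V] (G : SimpleGraph V) (c : ℝ) (F : Finset (Sym2 V)) (e : Sym2 V) : Prop :=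
  e ∈ G.edgeSet ∧ ∃ u v : V, e = s(u, v) ∧
    ¬ (SimpleGraph.fromEdgeSet (↑(F.erase e) : Set (Sym2 V))).Reachable u v ∧
    c * Fintype.card V ≤ (compCard (F.erase e) u : ℝ) ∧
    c * Fintype.card V ≤ (compCard (F.erase e) v : ℝ)

/-- `F` has more than one component with at least `s` vertices. -/
def TwoLargeComponents [Fintype V] (F : Finset (Sym2 V)) (s : ℝ) : Prop :=
  ∃ v w : V, ¬ (SimpleGraph.fromEdgeSet (↑F : Set (Sym2 V))).Reachable v w ∧
    s ≤ (compCard F v : ℝ) ∧ s ≤ (compCard F w : ℝ)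

/-- The edge-isoperimetric number (Cheeger constant) of `G`. -/
noncomputable def isoNumber [Fintype V] (G : SimpleGraph V) : ℝ :=
  sInf {x : ℝ | ∃ A : Finset V, 0 < A.card ∧ (A.card : ℝ) ≤ Fintype.card V / 2 ∧
    x = ((edgeBoundary G ↑A).ncard : ℝ) / A.card}


/-- The grid graph on `{1, ..., d}^d`: two vertices are adjacent iff they differ by
exactly `1` in exactly one coordinate and agree in all others. -/
def gridGraph (d : ℕ) : SimpleGraph (Fin d → Fin d) where
  Adj u v := ∃ i, (((u i : ℕ) + 1 = (v i : ℕ)) ∨ ((v i : ℕ) + 1 = (u i : ℕ))) ∧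
    ∀ j, j ≠ i → u j = v j
  symm := by
    constructor
    rintro u v ⟨i, h1, h2⟩
    exact ⟨i, h1.symm, fun j hj => (h2 j hj).symm⟩
  loopless := by
    constructor
    rintro u ⟨i, h1, -⟩
    rcases h1 with h | h <;> omega


lemma ivt_nat (P : ℕ → Prop) : ∀ n, P 0 → ¬ P n → ∃ k, k < n ∧ P k ∧ ¬ P (k + 1) := by
  intro n
  induction n with
  | zero => intro h0 h; exact absurd h0 h
  | succ n ih =>
    intro h0 hn
    by_cases hPn : P n
    · exact ⟨n, Nat.lt_succ_self n, hPn, hn⟩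
    · obtain ⟨k, hk, h1, h2⟩ := ih h0 hPn
      exact ⟨k, hk.trans (Nat.lt_succ_self n), h1, h2⟩

lemma one_dim_cross {d : ℕ} (A : Finset (Fin d → Fin d)) (i : Fin d)
    (w : Fin d → Fin d → Fin d) (a b : Fin d) (ha : w a ∈ A) (hb : w b ∉ A) :
    ∃ t t' : Fin d, ((t : ℕ) + 1 = (t' : ℕ) ∨ (t' : ℕ) + 1 = (t : ℕ)) ∧ w t ∈ A ∧ w t' ∉ A := by
  have hd0 : 0 < d := i.pos
  have hna : (a : ℕ) < d := a.isLt
  have hnb : (b : ℕ) < d := b.isLt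
  rcases lt_trichotomy (a : ℕ) (b : ℕ) with hab | hab | hab
  · have hmin : ∀ m : ℕ, min ((a : ℕ) + m) (d - 1) < d := by intro m; omega
    obtain ⟨m, hm, h1, h2⟩ :=
      ivt_nat (fun m => w ⟨min ((a : ℕ) + m) (d - 1), hmin m⟩ ∈ A) ((b : ℕ) - (a : ℕ))
        (by show w ⟨min ((a:ℕ) + 0) (d-1), hmin 0⟩ ∈ A
            rw [show (⟨min ((a:ℕ) + 0) (d-1), hmin 0⟩ : Fin d) = a from Fin.ext (by simp; omega)]
            exact ha)
        (by show ¬ w ⟨min ((a:ℕ) + ((b:ℕ) - (a:ℕ))) (d-1), hmin _⟩ ∈ A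
            rw [show (⟨min ((a:ℕ) + ((b:ℕ) - (a:ℕ))) (d-1), hmin _⟩ : Fin d) = b from
              Fin.ext (by simp; omega)]
            exact hb)
    refine ⟨⟨(a:ℕ) + m, by omega⟩, ⟨(a:ℕ) + m + 1, by omega⟩, Or.inl rfl, ?_, ?_⟩
    · rwa [show (⟨(a:ℕ) + m, by omega⟩ : Fin d) = ⟨min ((a:ℕ) + m) (d-1), hmin m⟩ from
        Fin.ext (by simp; omega)]
    · rwa [show (⟨(a:ℕ) + m + 1, by omega⟩ : Fin d) = ⟨min ((a:ℕ) + (m+1)) (d-1), hmin _⟩ from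
        Fin.ext (by simp; omega)]
  · exact absurd ha (by rwa [show a = b from Fin.ext hab])
  · have hmin : ∀ m : ℕ, (a : ℕ) - m < d := by intro m; omega
    obtain ⟨m, hm, h1, h2⟩ :=
      ivt_nat (fun m => w ⟨(a : ℕ) - m, hmin m⟩ ∈ A) ((a : ℕ) - (b : ℕ))
        (by show w ⟨(a:ℕ) - 0, hmin 0⟩ ∈ A
            rw [show (⟨(a:ℕ) - 0, hmin 0⟩ : Fin d) = a from Fin.ext (by simp)]
            exact ha)
        (by show ¬ w ⟨(a:ℕ) - ((a:ℕ) - (b:ℕ)), hmin _⟩ ∈ A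
            rw [show (⟨(a:ℕ) - ((a:ℕ) - (b:ℕ)), hmin _⟩ : Fin d) = b from
              Fin.ext (by simp; omega)]
            exact hb)
    exact ⟨⟨(a:ℕ) - m, hmin m⟩, ⟨(a:ℕ) - (m+1), hmin _⟩, Or.inr (by simp; omega), h1, h2⟩

/-- A boundary edge on the canonical path from `u` to `v`, with its structure. -/
def GridCross {d : ℕ} (A : Finset (Fin d → Fin d)) (u v : Fin d → Fin d)
    (e : Sym2 (Fin d → Fin d)) : Prop :=
  ∃ (i : Fin d) (x y : Fin d → Fin d), e = s(x, y) ∧ x ∈ A ∧ y ∉ A ∧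
    (((x i : ℕ) + 1 = (y i : ℕ)) ∨ ((y i : ℕ) + 1 = (x i : ℕ))) ∧
    (∀ j, j ≠ i → x j = y j) ∧
    (∀ j : Fin d, (j : ℕ) < (i : ℕ) → x j = v j) ∧
    (∀ j : Fin d, (i : ℕ) < (j : ℕ) → x j = u j)

lemma exists_cross {d : ℕ} (A : Finset (Fin d → Fin d)) {u v : Fin d → Fin d}
    (hu : u ∈ A) (hv : v ∉ A) : ∃ e, GridCross A u v e := by
  classical
  set z : ℕ → (Fin d → Fin d) := fun k j => if (j : ℕ) < k then v j else u j with hz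
  have h0 : z 0 ∈ A := by
    have : z 0 = u := by funext j; simp [hz]
    rwa [this]
  have hdA : ¬ z d ∈ A := by
    have : z d = v := by funext j; simp [hz, j.isLt]
    rwa [this]
  obtain ⟨k, hk, hk1, hk2⟩ := ivt_nat (fun k => z k ∈ A) d h0 hdA
  set i : Fin d := ⟨k, hk⟩ with hi
  set w : Fin d → Fin d → Fin d := fun c j => if j = i then c else z k j with hw
  have hwu : w (u i) = z k := by
    funext j
    by_cases h : j = i
    · subst h; simp [hw, hz, hi]
    · simp [hw, h]
  have hwv : w (v i) = z (k + 1) := by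
    funext j
    by_cases h : j = i
    · subst h; simp [hw, hz, hi]
    · have hj : (j : ℕ) ≠ k := fun hc => h (Fin.ext (by simp [hi, hc]))
      simp only [hw, if_neg h, hz]
      by_cases hlt : (j : ℕ) < k
      · rw [if_pos hlt, if_pos (by omega)]
      · rw [if_neg hlt, if_neg (by omega)]
  obtain ⟨t, t', hadj, ht, ht'⟩ := one_dim_cross A i w (u i) (v i) (hwu ▸ hk1) (hwv ▸ hk2)
  refine ⟨s(w t, w t'), i, w t, w t', rfl, ht, ht', ?_, ?_, ?_, ?_⟩
  · simpa [hw] using hadj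
  · intro j hj; simp [hw, hj]
  · intro j hj
    have hji : j ≠ i := fun hc => by rw [hc] at hj; omega
    show (if j = i then t else z k j) = v j
    rw [if_neg hji]
    show (if (j : ℕ) < k then v j else u j) = v j
    rw [if_pos (show (j : ℕ) < k from hj)]
  · intro j hj
    have hji : j ≠ i := fun hc => by rw [hc] at hj; omega
    show (if j = i then t else z k j) = u j
    rw [if_neg hji]
    show (if (j : ℕ) < k then v j else u j) = u j
    rw [if_neg (show ¬ (j : ℕ) < k from by have : (i : ℕ) = k := rfl; omega)]

lemma cross_mem {d : ℕ} (A : Finset (Fin d → Fin d)) {u v : Fin d → Fin d}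
    {e : Sym2 (Fin d → Fin d)} (h : GridCross A u v e) :
    e ∈ edgeBoundary (gridGraph d) ↑A := by
  obtain ⟨i, x, y, rfl, hx, hy, hadj, hagr, -, -⟩ := h
  exact ⟨(SimpleGraph.mem_edgeSet _).mpr ⟨i, hadj, hagr⟩, x, y, rfl, hx, hy⟩

theorem grid_edge_isoperimetry
    (d : ℕ) (hd : 2 ≤ d) (A : Finset (Fin d → Fin d))
    (h0 : 0 < A.card) (h2 : (A.card : ℝ) ≤ (d : ℝ) ^ d / 2) :
    (A.card : ℝ) / (2 * d) ≤ ((edgeBoundary (gridGraph d) ↑A).ncard : ℝ) := by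
  classical
  have hd0 : 0 < d := by omega
  have hcardV : Fintype.card (Fin d → Fin d) = d ^ d := by simp
  have hfin : (edgeBoundary (gridGraph d) (↑A : Set (Fin d → Fin d))).Finite := Set.toFinite _
  set B := hfin.toFinset with hBdef
  have hncard : (edgeBoundary (gridGraph d) (↑A : Set (Fin d → Fin d))).ncard = B.card :=
    Set.ncard_eq_toFinset_card _ hfin
  set f : ((Fin d → Fin d) × (Fin d → Fin d)) → Sym2 (Fin d → Fin d) :=
    fun p => if h : ∃ e, GridCross A p.1 p.2 e then h.choose
      else s(fun _ => ⟨0, hd0⟩, fun _ => ⟨0, hd0⟩) with hfdef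
  have hf : ∀ p ∈ A ×ˢ Aᶜ, GridCross A p.1 p.2 (f p) := by
    intro p hp
    rw [Finset.mem_product] at hp
    have hex := exists_cross A hp.1 (Finset.mem_compl.mp hp.2)
    simp only [hfdef, dif_pos hex]
    exact hex.choose_spec
  have hmaps : ∀ p ∈ A ×ˢ Aᶜ, f p ∈ B := fun p hp =>
    hfin.mem_toFinset.mpr (cross_mem A (hf p hp))
  have hsum : (A ×ˢ Aᶜ).card = ∑ e ∈ B, ((A ×ˢ Aᶜ).filter fun p => f p = e).card :=
    Finset.card_eq_sum_card_fiberwise hmaps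
  have hfiber : ∀ e ∈ B, ((A ×ˢ Aᶜ).filter fun p => f p = e).card ≤ d ^ d * d := by
    intro e he
    by_cases hne : ((A ×ˢ Aᶜ).filter fun p => f p = e).Nonempty
    · obtain ⟨p0, hp0⟩ := hne
      rw [Finset.mem_filter] at hp0
      obtain ⟨i0, x0, y0, rfl, hx0, hy0, hadj0, hagr0, -, -⟩ := hp0.2 ▸ hf p0 hp0.1
      have hrec : ∀ p ∈ (A ×ˢ Aᶜ).filter fun p => f p = s(x0, y0),
          (∀ j : Fin d, (j : ℕ) < (i0 : ℕ) → x0 j = p.2 j) ∧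
          (∀ j : Fin d, (i0 : ℕ) < (j : ℕ) → x0 j = p.1 j) := by
        intro p hp
        rw [Finset.mem_filter] at hp
        obtain ⟨i, x, y, he', hx, hy, hadj, hagr, hlt, hgt⟩ := hp.2 ▸ hf p hp.1
        obtain ⟨hx', hy'⟩ | ⟨hx', hy'⟩ := Sym2.eq_iff.mp he'.symm
        swap
        · exact absurd (hx' ▸ hx) hy0
        subst hx'; subst hy'
        have hine : x i ≠ y i := by
          intro hc
          rcases hadj with h | h <;> rw [hc] at h <;> omega
        have hii : i = i0 := by
          by_contra hii
          exact hine (hagr0 i hii)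
        subst hii
        exact ⟨fun j hj => hlt j hj, fun j hj => hgt j hj⟩
      calc ((A ×ˢ Aᶜ).filter fun p => f p = s(x0, y0)).card
          ≤ (Finset.univ : Finset ((Fin d → Fin d) × Fin d)).card := by
            apply Finset.card_le_card_of_injOn
              (fun p => ((fun j => if (j : ℕ) ≤ (i0 : ℕ) then p.1 j else p.2 j, p.2 i0) :
                (Fin d → Fin d) × Fin d))
              (fun _ _ => Finset.mem_univ _)
            intro p hp q hq heq
            obtain ⟨hpl, hpg⟩ := hrec p hp
            obtain ⟨hql, hqg⟩ := hrec q hq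
            have h1 := congrArg Prod.fst heq
            have h2 := congrArg Prod.snd heq
            simp only at h1 h2
            have e1 : p.1 = q.1 := by
              funext j
              by_cases hj : (j : ℕ) ≤ (i0 : ℕ)
              · have := congrFun h1 j
                simpa [hj] using this
              · rw [← hpg j (by omega), ← hqg j (by omega)]
            have e2 : p.2 = q.2 := by
              funext j
              rcases lt_trichotomy (j : ℕ) (i0 : ℕ) with h | h | h
              · rw [← hpl j h, ← hql j h]
              · have : j = i0 := Fin.ext h
                subst this
                exact h2
              · have := congrFun h1 j
                simpa [not_le.mpr h] using this
            exact Prod.ext e1 e2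
        _ = d ^ d * d := by simp [Fintype.card_fun]
    · rw [Finset.not_nonempty_iff_eq_empty] at hne
      simp [hne]
  have htot : (A ×ˢ Aᶜ).card ≤ B.card * (d ^ d * d) := by
    rw [hsum]
    calc ∑ e ∈ B, ((A ×ˢ Aᶜ).filter fun p => f p = e).card
        ≤ ∑ _e ∈ B, d ^ d * d := Finset.sum_le_sum hfiber
      _ = B.card * (d ^ d * d) := by rw [Finset.sum_const, smul_eq_mul]
  have hAle : A.card ≤ d ^ d := hcardV ▸ Finset.card_le_univ A
  have hpairs : (A ×ˢ Aᶜ).card = A.card * (d ^ d - A.card) := by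
    rw [Finset.card_product, Finset.card_compl, hcardV]
  rw [hpairs] at htot
  have hreal : (A.card : ℝ) * ((d : ℝ) ^ d - A.card) ≤ B.card * ((d : ℝ) ^ d * d) := by
    calc (A.card : ℝ) * ((d : ℝ) ^ d - A.card)
        = ((A.card * (d ^ d - A.card) : ℕ) : ℝ) := by
          push_cast [Nat.cast_sub hAle]; ring
      _ ≤ ((B.card * (d ^ d * d) : ℕ) : ℝ) := Nat.cast_le.mpr htot
      _ = B.card * ((d : ℝ) ^ d * d) := by push_cast; ring
  have hdr : (0 : ℝ) < d := by exact_mod_cast hd0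
  have hpow : (0 : ℝ) < (d : ℝ) ^ d := by positivity
  have ha : (0 : ℝ) < A.card := by exact_mod_cast h0
  rw [hncard, div_le_iff₀ (by linarith : (0 : ℝ) < 2 * d)]
  have h3 : (A.card : ℝ) * ((d : ℝ) ^ d / 2) ≤ (A.card : ℝ) * ((d : ℝ) ^ d - A.card) :=
    mul_le_mul_of_nonneg_left (by linarith) ha.le
  have h4 : (A.card : ℝ) * (d : ℝ) ^ d ≤ ((B.card : ℝ) * (2 * d)) * (d : ℝ) ^ d := by
    nlinarith [h3, hreal]
  exact le_of_mul_le_mul_right h4 hpow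


end
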